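/- arXiv:1601.02862 — 3 statements merged into one kernel-verified Lean document; each statement's English description precedes it below -/
import Mathlib

section
/- Let h : [0,1]² → ℝ be Lebesgue integrable and define f(x,y) = ∫₀ˣ (∫₀ʸ h(u,v) dv) du. Then there exists a measurable set A ⊆ [0,1] with μ(A) = 1 such that for every x₀ ∈ A and every y ∈ [0,1], the partial derivative f'_x(x₀,y) exists and equals ∫₀ʸ h(x₀,v) dv. -/
open MeasureTheory Set Metric Filter

set_option maxHeartbeats 1000000 in
/-- If `h` is Lebesgue integrable on `[0,1]²` and
`f(x,y) = ∫₀ˣ (∫₀ʸ h(u,v) dv) du`, then there is a measurable set `A ⊆ [0,1]` of full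
measure such that for all `x₀ ∈ A` and `y ∈ [0,1]` the partial derivative of `f` with
respect to the first variable at `x₀` exists and equals `∫₀ʸ h(x₀,v) dv`. -/
theorem stmt0 (h : ℝ → ℝ → ℝ)
    (hint : IntegrableOn (fun p : ℝ × ℝ => h p.1 p.2) (Icc (0:ℝ) 1 ×ˢ Icc (0:ℝ) 1) volume)
    (f : ℝ → ℝ → ℝ)
    (hf : ∀ x ∈ Icc (0:ℝ) 1, ∀ y ∈ Icc (0:ℝ) 1,
      f x y = ∫ u in (0:ℝ)..x, ∫ v in (0:ℝ)..y, h u v) :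
    ∃ A ⊆ Icc (0:ℝ) 1, MeasurableSet A ∧ volume A = 1 ∧
      ∀ x₀ ∈ A, ∀ y ∈ Icc (0:ℝ) 1,
        HasDerivWithinAt (fun t => f t y) (∫ v in (0:ℝ)..y, h x₀ v) (Icc (0:ℝ) 1) x₀ := by
  set H : ℝ → ℝ → ℝ := fun u v => (Icc (0:ℝ) 1 ×ˢ Icc (0:ℝ) 1).indicator (fun p : ℝ × ℝ => h p.1 p.2) (u, v) with hHdef
  have hmeas : MeasurableSet (Icc (0:ℝ) 1 ×ˢ Icc (0:ℝ) 1) := measurableSet_Icc.prod measurableSet_Icc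
  have HP : Integrable (fun p : ℝ × ℝ => H p.1 p.2) ((volume : Measure ℝ).prod volume) := by
    rw [← Measure.volume_eq_prod]
    exact (integrable_indicator_iff hmeas).2 hint
  have HPr : ∀ t : Set ℝ, MeasurableSet t →
      Integrable (fun p : ℝ × ℝ => H p.1 p.2) ((volume : Measure ℝ).prod (volume.restrict t)) := by
    intro t ht
    have : (volume : Measure ℝ).prod (volume.restrict t)
        = ((volume : Measure ℝ).prod volume).restrict (univ ×ˢ t) := by
      rw [← Measure.prod_restrict, Measure.restrict_univ]
    rw [this]
    exact HP.integrableOn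
  set g : ℝ → ℝ → ℝ := fun y u => ∫ v in Ioc (0:ℝ) y, H u v with hgdef
  set Φ : ℝ → ℝ → ℝ → ℝ := fun a b u => ∫ v in Ioc a b, |H u v| with hΦdef
  have hgint : ∀ y : ℝ, Integrable (g y) volume := fun y =>
    (HPr _ measurableSet_Ioc).integral_prod_left
  have hΦint : ∀ a b : ℝ, Integrable (Φ a b) volume := by
    intro a b
    have := (HPr _ (measurableSet_Ioc (a := a) (b := b))).integral_norm_prod_left
    simpa [Real.norm_eq_abs] using this
  have hΦnonneg : ∀ a b u, 0 ≤ Φ a b u := fun a b u =>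
    integral_nonneg fun v => abs_nonneg _
  -- the a.e. property
  set P : ℝ → Prop := fun x₀ =>
    Integrable (fun v => H x₀ v) volume ∧
    (∀ q : ℚ, Tendsto (fun r => ⨍ u in closedBall x₀ r, |g q u - g q x₀|)
        (nhdsWithin 0 (Ioi 0)) (nhds 0)) ∧
    (∀ p : ℚ × ℚ, Tendsto (fun r => ⨍ u in closedBall x₀ r, Φ p.1 p.2 u)
        (nhdsWithin 0 (Ioi 0)) (nhds (Φ p.1 p.2 x₀))) with hPdef
  have hP : ∀ᵐ x₀ : ℝ, P x₀ := by
    have h1 : ∀ᵐ u : ℝ, Integrable (fun v => H u v) volume := HP.prod_right_ae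
    have h2 : ∀ᵐ x₀ : ℝ, ∀ q : ℚ, Tendsto (fun r => ⨍ u in closedBall x₀ r, |g q u - g q x₀|)
        (nhdsWithin 0 (Ioi 0)) (nhds 0) := by
      rw [ae_all_iff]
      intro q
      filter_upwards [(Besicovitch.vitaliFamily (volume : Measure ℝ)).ae_tendsto_average_norm_sub
        (hgint q).locallyIntegrable] with x₀ hx₀
      have := hx₀.comp (Besicovitch.tendsto_filterAt volume x₀)
      simpa [Function.comp_def, Real.norm_eq_abs] using this
    have h3 : ∀ᵐ x₀ : ℝ, ∀ p : ℚ × ℚ, Tendsto (fun r => ⨍ u in closedBall x₀ r, Φ p.1 p.2 u)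
        (nhdsWithin 0 (Ioi 0)) (nhds (Φ p.1 p.2 x₀)) := by
      rw [ae_all_iff]
      intro p
      filter_upwards [(Besicovitch.vitaliFamily (volume : Measure ℝ)).ae_tendsto_average
        (hΦint p.1 p.2).locallyIntegrable] with x₀ hx₀
      have := hx₀.comp (Besicovitch.tendsto_filterAt volume x₀)
      simpa [Function.comp_def] using this
    filter_upwards [h1, h2, h3] with x₀ a b c
    exact ⟨a, b, c⟩
  -- build the set A
  set N := toMeasurable volume {x : ℝ | ¬ P x} with hNdef
  have hNnull : volume N = 0 := by
    rw [hNdef, measure_toMeasurable]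
    exact hP
  refine ⟨Ioo 0 1 ∩ Nᶜ, ?_, ?_, ?_, ?_⟩
  · exact inter_subset_left.trans Ioo_subset_Icc_self
  · exact measurableSet_Ioo.inter (measurableSet_toMeasurable _ _).compl
  · rw [measure_inter_conull (by rwa [compl_compl]), Real.volume_Ioo]
    simp
  intro x₀ hx₀ y hy
  have hx₀Ioo : x₀ ∈ Ioo (0:ℝ) 1 := hx₀.1
  have hx₀Icc : x₀ ∈ Icc (0:ℝ) 1 := Ioo_subset_Icc_self hx₀Ioo
  have hPx : P x₀ := by
    by_contra hc
    exact hx₀.2 (subset_toMeasurable _ _ hc)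
  obtain ⟨hint_x₀, hb, hc⟩ := hPx
  -- the inner integral rewriting
  have hinner : ∀ u ∈ Icc (0:ℝ) 1, (∫ v in (0:ℝ)..y, h u v) = g y u := by
    intro u hu
    rw [intervalIntegral.integral_of_le hy.1]
    refine setIntegral_congr_fun measurableSet_Ioc fun v hv => ?_
    have hv1 : v ∈ Icc (0:ℝ) 1 := ⟨hv.1.le, hv.2.trans hy.2⟩
    simp only [hHdef]
    rw [indicator_of_mem (mk_mem_prod hu hv1)]
  set F : ℝ → ℝ := fun t => ∫ u in (0:ℝ)..t, g y u with hFdef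
  have hcongr : ∀ t ∈ Icc (0:ℝ) 1, f t y = F t := by
    intro t ht
    rw [hf t ht y hy, hFdef]
    refine intervalIntegral.integral_congr fun u hu => ?_
    refine hinner u ?_
    rcases hu with ⟨h1, h2⟩
    constructor
    · exact le_trans (le_of_eq (min_eq_left ht.1).symm) h1
    · exact le_trans h2 (max_le zero_le_one ht.2)
  rw [hinner x₀ hx₀Icc]
  have hFii : ∀ a b : ℝ, IntervalIntegrable (g y) volume a b := fun a b =>
    (hgint y).intervalIntegrable
  suffices Hder : HasDerivWithinAt F (g y x₀) (Icc (0:ℝ) 1) x₀ by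
    exact Hder.congr hcongr (hcongr x₀ hx₀Icc)
  rw [hasDerivWithinAt_iff_tendsto_slope, Metric.tendsto_nhds]
  intro ε hε
  -- absolute continuity: choose a small interval around y
  have hmeasto : Tendsto (fun n : ℕ => (volume : Measure ℝ)
      (Ioc (y - ((n:ℝ)+1)⁻¹) (y + ((n:ℝ)+1)⁻¹))) atTop (nhds 0) := by
    have hseq : Tendsto (fun n : ℕ => ((n:ℝ)+1)⁻¹) atTop (nhds 0) := by
      simpa [one_div] using tendsto_one_div_add_atTop_nhds_zero_nat (𝕜 := ℝ)
    have h2a : Tendsto (fun n : ℕ => (y + ((n:ℝ)+1)⁻¹) - (y - ((n:ℝ)+1)⁻¹)) atTop (nhds 0) := by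
      have := hseq.const_mul 2
      simp only [mul_zero] at this
      refine this.congr fun n => by ring
    simp only [Real.volume_Ioc]
    have := ENNReal.tendsto_ofReal h2a
    simpa using this
  have habs : Tendsto (fun n : ℕ =>
      ∫ v in Ioc (y - ((n:ℝ)+1)⁻¹) (y + ((n:ℝ)+1)⁻¹), |H x₀ v|) atTop (nhds 0) :=
    hint_x₀.abs.tendsto_setIntegral_nhds_zero hmeasto
  obtain ⟨n, hn⟩ := (habs.eventually (gt_mem_nhds (show (0:ℝ) < ε/8 by linarith))).exists
  set a : ℝ := ((n:ℝ)+1)⁻¹ with hadef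
  have ha : 0 < a := by positivity
  obtain ⟨q₂, hq₂1, hq₂2⟩ := exists_rat_btwn (show y < y + a by linarith)
  have hyq₂ : y ≤ (q₂:ℝ) := hq₂1.le
  obtain ⟨q₁, hq₁0, hq₁y, hq₁a⟩ : ∃ q₁ : ℚ, 0 ≤ (q₁:ℝ) ∧ (q₁:ℝ) ≤ y ∧ y - a ≤ (q₁:ℝ) := by
    rcases eq_or_lt_of_le hy.1 with h0 | h0
    · exact ⟨0, by simp, by simp [← h0], by push_cast; linarith⟩
    · obtain ⟨q, hq1, hq2⟩ := exists_rat_btwn (show max (y - a) 0 < y from max_lt (by linarith) h0)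
      exact ⟨q, (le_max_right _ _).trans hq1.le, hq2.le, (le_max_left _ _).trans hq1.le⟩
  have hΦx₀ : Φ q₁ q₂ x₀ < ε/8 := by
    refine lt_of_le_of_lt ?_ hn
    refine setIntegral_mono_set hint_x₀.abs.integrableOn
      (Eventually.of_forall fun v => abs_nonneg _)
      (Ioc_subset_Ioc hq₁a hq₂2.le).eventuallyLE
  have E1 := (hb q₁).eventually (gt_mem_nhds (show (0:ℝ) < ε/8 by linarith))
  have E2 := (hc (q₁, q₂)).eventually (gt_mem_nhds
    (show Φ (q₁:ℝ) (q₂:ℝ) x₀ < Φ (q₁:ℝ) (q₂:ℝ) x₀ + ε/8 by linarith))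
  obtain ⟨δ, hδmem, hδ⟩ := mem_nhdsGT_iff_exists_Ioc_subset.1 (E1.and E2)
  filter_upwards [self_mem_nhdsWithin,
    mem_nhdsWithin_of_mem_nhds (Metric.ball_mem_nhds x₀ hδmem)] with t ht htb
  have htI : t ∈ Icc (0:ℝ) 1 := ht.1
  have htne : t ≠ x₀ := ht.2
  set r : ℝ := |t - x₀| with hrdef
  have hr0 : 0 < r := abs_pos.2 (sub_ne_zero.2 htne)
  obtain ⟨havg1, havg2⟩ := hδ ⟨hr0, by
    rw [hrdef, ← Real.dist_eq]; exact (mem_ball.1 htb).le⟩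
  -- geometry
  have hsubI : Set.uIoc x₀ t ⊆ closedBall x₀ r := by
    intro u hu
    simp only [Set.uIoc, Set.mem_Ioc] at hu
    obtain ⟨hA, hB⟩ := abs_sub_le_iff.1 (le_of_eq hrdef.symm)
    have hmin : x₀ - r ≤ min x₀ t := le_min (by linarith) (by linarith)
    have hmax : max x₀ t ≤ x₀ + r := max_le (by linarith) (by linarith)
    rw [mem_closedBall, Real.dist_eq, abs_sub_le_iff]
    constructor
    · linarith [hu.2]
    · linarith [hu.1.le]
  have hvol : (volume : Measure ℝ) (Set.uIoc x₀ t) = ENNReal.ofReal r := by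
    rw [Set.uIoc, Real.volume_Ioc, max_sub_min_eq_abs, hrdef]
  have hball : ∀ w : ℝ → ℝ, (∫ u in closedBall x₀ r, w u)
      = (2*r) * ⨍ u in closedBall x₀ r, w u := by
    intro w
    rw [setAverage_eq, measureReal_def, Real.volume_closedBall, ENNReal.toReal_ofReal (by linarith), smul_eq_mul,
      ← mul_assoc, mul_inv_cancel₀ (by positivity), one_mul]
  -- pointwise bound
  have hbound : ∀ z : ℝ, Integrable (fun v => H z v) volume →
      |g y z - g (q₁:ℝ) z| ≤ Φ q₁ q₂ z := by
    intro z hz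
    have hsplit : g y z - g (q₁:ℝ) z = ∫ v in Ioc (q₁:ℝ) y, H z v := by
      have hun : Ioc (0:ℝ) y = Ioc (0:ℝ) (q₁:ℝ) ∪ Ioc (q₁:ℝ) y :=
        (Ioc_union_Ioc_eq_Ioc hq₁0 hq₁y).symm
      simp only [hgdef]
      rw [hun, setIntegral_union (Ioc_disjoint_Ioc_of_le le_rfl) measurableSet_Ioc
        hz.integrableOn hz.integrableOn]
      ring
    rw [hsplit]
    calc |∫ v in Ioc (q₁:ℝ) y, H z v| ≤ ∫ v in Ioc (q₁:ℝ) y, |H z v| := by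
          simpa [Real.norm_eq_abs] using
            norm_integral_le_integral_norm (μ := (volume : Measure ℝ).restrict (Ioc (q₁:ℝ) y))
              (fun v => H z v)
      _ ≤ Φ q₁ q₂ z := setIntegral_mono_set hz.abs.integrableOn
          (Eventually.of_forall fun v => abs_nonneg _)
          (Ioc_subset_Ioc_right hyq₂).eventuallyLE
  have hptw : ∀ᵐ u : ℝ, |g y u - g y x₀|
      ≤ |g (q₁:ℝ) u - g (q₁:ℝ) x₀| + Φ q₁ q₂ u + Φ q₁ q₂ x₀ := by
    filter_upwards [HP.prod_right_ae] with u hu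
    have h1 := hbound u hu
    have h2 := hbound x₀ hint_x₀
    have hre : g y u - g y x₀ = (g (q₁:ℝ) u - g (q₁:ℝ) x₀)
        + ((g y u - g (q₁:ℝ) u) - (g y x₀ - g (q₁:ℝ) x₀)) := by ring
    rw [hre]
    refine (abs_add_le _ _).trans ?_
    have h3 : |(g y u - g (q₁:ℝ) u) - (g y x₀ - g (q₁:ℝ) x₀)|
        ≤ |g y u - g (q₁:ℝ) u| + |g y x₀ - g (q₁:ℝ) x₀| := abs_sub _ _
    linarith
  -- integrabilities
  have hμI : (volume : Measure ℝ) (Set.uIoc x₀ t) < ⊤ := by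
    rw [hvol]; exact ENNReal.ofReal_lt_top
  have hμB : (volume : Measure ℝ) (closedBall x₀ r) < ⊤ := by
    rw [Real.volume_closedBall]; exact ENNReal.ofReal_lt_top
  have hgydI : IntegrableOn (fun u => |g y u - g y x₀|) (Set.uIoc x₀ t) volume := by
    have hcc : IntegrableOn (fun _ : ℝ => g y x₀) (Set.uIoc x₀ t) volume :=
      integrableOn_const hμI.ne
    exact ((hgint y).integrableOn.sub hcc).abs
  have hgqdI : ∀ s : Set ℝ, (volume : Measure ℝ) s < ⊤ →
      IntegrableOn (fun u => |g (q₁:ℝ) u - g (q₁:ℝ) x₀|) s volume := by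
    intro s hs
    have hcc : IntegrableOn (fun _ : ℝ => g (q₁:ℝ) x₀) s volume :=
      integrableOn_const hs.ne
    exact ((hgint _).integrableOn.sub hcc).abs
  -- slope computation
  have htx : t - x₀ ≠ 0 := sub_ne_zero.2 htne
  have hIeq : F t - F x₀ = ∫ u in x₀..t, g y u :=
    intervalIntegral.integral_interval_sub_left (hFii 0 t) (hFii 0 x₀)
  have hI2 : (∫ u in x₀..t, g y u) - (t - x₀) * g y x₀
      = ∫ u in x₀..t, (g y u - g y x₀) := by
    rw [intervalIntegral.integral_sub (hFii _ _) intervalIntegrable_const,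
      intervalIntegral.integral_const, smul_eq_mul]
  have hdist : dist (slope F x₀ t) (g y x₀)
      = |∫ u in x₀..t, (g y u - g y x₀)| / r := by
    rw [Real.dist_eq, slope_def_field, hIeq, ← hI2]
    rw [show (∫ u in x₀..t, g y u) / (t - x₀) - g y x₀
        = ((∫ u in x₀..t, g y u) - (t - x₀) * g y x₀) / (t - x₀) by field_simp]
    rw [abs_div, hrdef]
  have h2 : |∫ u in x₀..t, (g y u - g y x₀)| ≤ ∫ u in Set.uIoc x₀ t, |g y u - g y x₀| := by
    simpa [Real.norm_eq_abs] using
      intervalIntegral.norm_integral_le_integral_norm_uIoc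
        (f := fun u => g y u - g y x₀) (a := x₀) (b := t) (μ := (volume : Measure ℝ))
  have e1 : Integrable (fun u => |g (q₁:ℝ) u - g (q₁:ℝ) x₀|)
      ((volume : Measure ℝ).restrict (Set.uIoc x₀ t)) := hgqdI _ hμI
  have e2 : Integrable (fun u => Φ (q₁:ℝ) (q₂:ℝ) u)
      ((volume : Measure ℝ).restrict (Set.uIoc x₀ t)) := (hΦint _ _).integrableOn
  have e3 : Integrable (fun _ : ℝ => Φ (q₁:ℝ) (q₂:ℝ) x₀)
      ((volume : Measure ℝ).restrict (Set.uIoc x₀ t)) :=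
    integrableOn_const (C := Φ (q₁:ℝ) (q₂:ℝ) x₀) hμI.ne
  have e12 : Integrable (fun u => |g (q₁:ℝ) u - g (q₁:ℝ) x₀| + Φ (q₁:ℝ) (q₂:ℝ) u)
      ((volume : Measure ℝ).restrict (Set.uIoc x₀ t)) := by exact e1.add e2
  have h3 : ∫ u in Set.uIoc x₀ t, |g y u - g y x₀|
      ≤ ∫ u in Set.uIoc x₀ t, (|g (q₁:ℝ) u - g (q₁:ℝ) x₀| + Φ (q₁:ℝ) (q₂:ℝ) u + Φ (q₁:ℝ) (q₂:ℝ) x₀) :=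
    setIntegral_mono_ae hgydI (by exact e12.add e3) hptw
  have h4 : ∫ u in Set.uIoc x₀ t, (|g (q₁:ℝ) u - g (q₁:ℝ) x₀| + Φ (q₁:ℝ) (q₂:ℝ) u + Φ (q₁:ℝ) (q₂:ℝ) x₀)
      = (∫ u in Set.uIoc x₀ t, |g (q₁:ℝ) u - g (q₁:ℝ) x₀|)
        + (∫ u in Set.uIoc x₀ t, Φ (q₁:ℝ) (q₂:ℝ) u) + r * Φ (q₁:ℝ) (q₂:ℝ) x₀ := by
    rw [integral_add e12 e3, integral_add e1 e2, setIntegral_const, measureReal_def, hvol,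
      ENNReal.toReal_ofReal hr0.le, smul_eq_mul]
  have h5 : ∫ u in Set.uIoc x₀ t, |g (q₁:ℝ) u - g (q₁:ℝ) x₀|
      ≤ (2*r) * ⨍ u in closedBall x₀ r, |g (q₁:ℝ) u - g (q₁:ℝ) x₀| := by
    rw [← hball]
    exact setIntegral_mono_set (hgqdI _ hμB)
      (Eventually.of_forall fun u => abs_nonneg _) hsubI.eventuallyLE
  have h6 : ∫ u in Set.uIoc x₀ t, Φ (q₁:ℝ) (q₂:ℝ) u
      ≤ (2*r) * ⨍ u in closedBall x₀ r, Φ (q₁:ℝ) (q₂:ℝ) u := by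
    rw [← hball]
    exact setIntegral_mono_set (hΦint _ _).integrableOn
      (Eventually.of_forall fun u => hΦnonneg _ _ _) hsubI.eventuallyLE
  rw [hdist, div_lt_iff₀ hr0]
  have hh1 : (2*r) * ⨍ u in closedBall x₀ r, |g (q₁:ℝ) u - g (q₁:ℝ) x₀| < (2*r) * (ε/8) :=
    mul_lt_mul_of_pos_left havg1 (by positivity)
  have hh2 : (2*r) * ⨍ u in closedBall x₀ r, Φ (q₁:ℝ) (q₂:ℝ) u
      < (2*r) * (Φ (q₁:ℝ) (q₂:ℝ) x₀ + ε/8) := mul_lt_mul_of_pos_left havg2 (by positivity)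
  have hh3 : (2*r) * (Φ (q₁:ℝ) (q₂:ℝ) x₀ + ε/8) ≤ (2*r) * (ε/8 + ε/8) :=
    mul_le_mul_of_nonneg_left (by linarith) (by positivity)
  have hh4 : r * Φ (q₁:ℝ) (q₂:ℝ) x₀ ≤ r * (ε/8) :=
    mul_le_mul_of_nonneg_left hΦx₀.le hr0.le
  have hεr : 0 < ε * r := mul_pos hε hr0
  calc |∫ u in x₀..t, (g y u - g y x₀)|
      ≤ ∫ u in Set.uIoc x₀ t, |g y u - g y x₀| := h2
    _ ≤ (∫ u in Set.uIoc x₀ t, |g (q₁:ℝ) u - g (q₁:ℝ) x₀|)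
        + (∫ u in Set.uIoc x₀ t, Φ (q₁:ℝ) (q₂:ℝ) u) + r * Φ (q₁:ℝ) (q₂:ℝ) x₀ := by
        rw [← h4]; exact h3
    _ < (2*r) * (ε/8) + (2*r) * (ε/8 + ε/8) + r * (ε/8) := by linarith
    _ = (7/8) * (ε * r) := by ring
    _ < ε * r := by linarith
end

section
/- Let Y ⊆ ℝ and f : [0,1] × Y → ℝ be such that (a) for every x ∈ [0,1], the function y ↦ f(x,y) is continuous on Y; (b) for every (x,y) ∈ [0,1] × Y the partial derivative f'_x(x,y) exists; and (c) f'_x is continuous with respect to x uniformly in y, i.e. for every ε > 0 there exists δ > 0 such that |f'_x(x,y) − f'_x(x',y)| < ε for all x, x' ∈ [0,1] with |x − x'| < δ and all y ∈ Y. Then the function (x,y) ↦ f'_x(x,y) is jointly continuous on [0,1] × Y. -/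
open MeasureTheory Set

/-- If `f : [0,1] × Y → ℝ` is continuous in `y`, has a partial derivative
`fx` with respect to the first variable everywhere, and `fx` is continuous in `x`
uniformly in `y`, then `fx` is jointly continuous on `[0,1] × Y`. -/
theorem stmt2 (Y : Set ℝ) (f fx : ℝ → ℝ → ℝ)
    (hcont : ∀ x ∈ Icc (0:ℝ) 1, ContinuousOn (fun y => f x y) Y)
    (hderiv : ∀ x ∈ Icc (0:ℝ) 1, ∀ y ∈ Y,
      HasDerivWithinAt (fun t => f t y) (fx x y) (Icc (0:ℝ) 1) x)
    (hunif : ∀ ε > 0, ∃ δ > 0, ∀ x ∈ Icc (0:ℝ) 1, ∀ x' ∈ Icc (0:ℝ) 1,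
      |x - x'| < δ → ∀ y ∈ Y, |fx x y - fx x' y| < ε) :
    ContinuousOn (fun p : ℝ × ℝ => fx p.1 p.2) (Icc (0:ℝ) 1 ×ˢ Y) := by
  -- Step 1: for each fixed x₀ ∈ [0,1], y ↦ fx x₀ y is continuous on Y.
  have hy : ∀ x₀ ∈ Icc (0:ℝ) 1, ContinuousOn (fun y => fx x₀ y) Y := by
    intro x₀ hx₀ y₀ hy₀
    rw [Metric.continuousWithinAt_iff]
    intro ε hε
    obtain ⟨δ, hδ, hδ'⟩ := hunif (ε/3) (by linarith)
    -- choose x' ∈ [0,1], x' ≠ x₀, |x' - x₀| < δ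
    obtain ⟨x', hx', hne, hclose⟩ :
        ∃ x' ∈ Icc (0:ℝ) 1, x' ≠ x₀ ∧ |x' - x₀| < δ := by
      set m := min (δ/2) (1/2) with hm
      have hm0 : 0 < m := lt_min (by linarith) (by norm_num)
      have hm1 : m ≤ δ/2 := min_le_left _ _
      have hm2 : m ≤ 1/2 := min_le_right _ _
      rcases le_total x₀ (1/2) with h | h
      · exact ⟨x₀ + m, ⟨by linarith [hx₀.1], by linarith⟩, by intro hc; linarith,
          by rw [add_sub_cancel_left, abs_of_pos hm0]; linarith⟩
      · exact ⟨x₀ - m, ⟨by linarith, by linarith [hx₀.2]⟩, by intro hc; linarith,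
          by rw [sub_sub_cancel_left, abs_neg, abs_of_pos hm0]; linarith⟩
    have hd : x' - x₀ ≠ 0 := sub_ne_zero.mpr hne
    -- MVT estimate: for all y ∈ Y, |slope - fx x₀ y| ≤ ε/3
    have key : ∀ y ∈ Y, |(f x' y - f x₀ y) / (x' - x₀) - fx x₀ y| ≤ ε/3 := by
      intro y hyY
      have hsub : uIcc x₀ x' ⊆ Icc (0:ℝ) 1 := uIcc_subset_Icc hx₀ hx'
      have habs : ∀ t ∈ uIcc x₀ x', |t - x₀| < δ := by
        intro t ht
        rcases le_total x₀ x' with h | h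
        · rw [uIcc_of_le h] at ht
          rw [abs_sub_lt_iff]
          have := abs_sub_lt_iff.mp hclose
          constructor <;> [linarith [ht.1, ht.2, this.1]; linarith [ht.1, ht.2, this.2]]
        · rw [uIcc_of_ge h] at ht
          rw [abs_sub_lt_iff]
          have := abs_sub_lt_iff.mp hclose
          constructor <;> [linarith [ht.1, ht.2, this.1]; linarith [ht.1, ht.2, this.2]]
      have hg : ∀ t ∈ uIcc x₀ x',
          HasDerivWithinAt (fun t => f t y - t * fx x₀ y) (fx t y - fx x₀ y) (uIcc x₀ x') t := by
        intro t ht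
        exact ((hderiv t (hsub ht) y hyY).mono hsub).sub
          (by simpa using (hasDerivWithinAt_id t (uIcc x₀ x')).mul_const (fx x₀ y))
      have hbound : ∀ t ∈ uIcc x₀ x', ‖fx t y - fx x₀ y‖ ≤ ε/3 := by
        intro t ht
        have := hδ' t (hsub ht) x₀ hx₀ (habs t ht) y hyY
        exact le_of_lt this
      have := (convex_uIcc x₀ x').norm_image_sub_le_of_norm_hasDerivWithin_le
        hg hbound left_mem_uIcc right_mem_uIcc
      -- this : ‖(f x' y - x' * c) - (f x₀ y - x₀ * c)‖ ≤ ε/3 * ‖x' - x₀‖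
      rw [div_sub' hd, abs_div]
      rw [div_le_iff₀ (abs_pos.mpr hd)]
      calc |f x' y - f x₀ y - (x' - x₀) * fx x₀ y|
          = ‖(f x' y - x' * fx x₀ y) - (f x₀ y - x₀ * fx x₀ y)‖ := by
            rw [Real.norm_eq_abs]; ring_nf
        _ ≤ ε/3 * ‖x' - x₀‖ := this
        _ = ε/3 * |x' - x₀| := by rw [Real.norm_eq_abs]
    -- the slope is continuous in y
    have hq : ContinuousWithinAt (fun y => (f x' y - f x₀ y) / (x' - x₀)) Y y₀ :=
      (((hcont x' hx' y₀ hy₀).sub (hcont x₀ hx₀ y₀ hy₀)).div_const _)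
    rw [Metric.continuousWithinAt_iff] at hq
    obtain ⟨δ₂, hδ₂, hq'⟩ := hq (ε/4) (by linarith)
    refine ⟨δ₂, hδ₂, fun y hyY hdist => ?_⟩
    have h1 := key y hyY
    have h2 := key y₀ hy₀
    have h3 := hq' hyY hdist
    rw [Real.dist_eq] at h3 ⊢
    have := abs_sub_le (fx x₀ y) ((f x' y - f x₀ y) / (x' - x₀)) (fx x₀ y₀)
    have h4 := abs_sub_le ((f x' y - f x₀ y) / (x' - x₀))
      ((f x' y₀ - f x₀ y₀) / (x' - x₀)) (fx x₀ y₀)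
    rw [abs_sub_comm] at h1
    calc |fx x₀ y - fx x₀ y₀| ≤ _ + _ := this
      _ < ε := by
        have h2' : |(f x' y₀ - f x₀ y₀) / (x' - x₀) - fx x₀ y₀| ≤ ε/3 := h2
        linarith
  -- Step 2: joint continuity.
  rintro ⟨x₀, y₀⟩ ⟨hx₀, hy₀⟩
  rw [Metric.continuousWithinAt_iff]
  intro ε hε
  obtain ⟨δ₁, hδ₁, h₁⟩ := hunif (ε/2) (by linarith)
  have := hy x₀ hx₀ y₀ hy₀
  rw [Metric.continuousWithinAt_iff] at this
  obtain ⟨δ₂, hδ₂, h₂⟩ := this (ε/2) (by linarith)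
  refine ⟨min δ₁ δ₂, lt_min hδ₁ hδ₂, ?_⟩
  rintro ⟨x, y⟩ ⟨hx, hyY⟩ hdist
  rw [Prod.dist_eq] at hdist
  simp only at hdist hx hyY ⊢
  have hdx : dist x x₀ < δ₁ := lt_of_le_of_lt (le_max_left _ _)
    (lt_of_lt_of_le hdist (min_le_left _ _)) |>.trans_le (le_refl _)
  have hdy : dist y y₀ < δ₂ := lt_of_le_of_lt (le_max_right _ _)
    (lt_of_lt_of_le hdist (min_le_right _ _)) |>.trans_le (le_refl _)
  have e1 : |fx x y - fx x₀ y| < ε/2 := by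
    apply h₁ x hx x₀ hx₀ _ y hyY
    rw [← Real.dist_eq]; exact hdx
  have e2 : |fx x₀ y - fx x₀ y₀| < ε/2 := by
    have := h₂ hyY hdy
    rwa [Real.dist_eq] at this
  rw [Real.dist_eq]
  calc |fx x y - fx x₀ y₀| ≤ |fx x y - fx x₀ y| + |fx x₀ y - fx x₀ y₀| :=
        abs_sub_le _ _ _
    _ < ε := by linarith
end

section
/- Let Y ⊆ ℝ and f : [0,1] × Y → ℝ be such that (a) for every x ∈ [0,1], the function y ↦ f(x,y) is continuous on Y; (b) for every (x,y) ∈ [0,1] × Y the second partial derivative f''_{xx}(x,y) exists (i.e. for each y ∈ Y the function x ↦ f(x,y) is twice differentiable on [0,1]); and (c) sup_{y ∈ Y} ∫₀¹ (f''_{xx}(x,y))² dx < ∞. Then the function (x,y) ↦ f'_x(x,y) is jointly continuous on [0,1] × Y. -/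
open MeasureTheory Set

open ENNReal

theorem aux_meas (g g' : ℝ → ℝ)
    (hd : ∀ x ∈ Icc (0:ℝ) 1, HasDerivWithinAt g (g' x) (Icc (0:ℝ) 1) x) :
    AEMeasurable g' (volume.restrict (Icc (0:ℝ) 1)) := by
  have hmeas : Measurable (fun x => derivWithin g (Ici x) x) := measurable_derivWithin_Ici g
  refine hmeas.aemeasurable.congr ?_
  have h1 : ∀ᵐ x ∂(volume.restrict (Icc (0:ℝ) 1)), x ≠ 1 := by
    refine ae_restrict_of_ae ?_
    have h0 : (volume : Measure ℝ) {(1:ℝ)} = 0 := measure_singleton 1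
    filter_upwards [measure_eq_zero_iff_ae_notMem.1 h0] with x hx
    simpa using hx
  filter_upwards [h1, ae_restrict_mem measurableSet_Icc] with x hx1 hx
  have hlt : x < 1 := lt_of_le_of_ne hx.2 hx1
  have hIci : HasDerivWithinAt g (g' x) (Ici x) x := by
    have h : HasDerivWithinAt g (g' x) (Icc x 1) x :=
      (hd x hx).mono (Icc_subset_Icc_left hx.1)
    apply h.mono_of_mem_nhdsWithin
    rw [← Ici_inter_Iic]
    exact Filter.inter_mem self_mem_nhdsWithin
      (mem_nhdsWithin_of_mem_nhds (Iic_mem_nhds hlt))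
  exact (hIci.derivWithin (uniqueDiffOn_Ici x x Set.self_mem_Ici))
theorem aux_holder (g : ℝ → ℝ) (hm : AEMeasurable g (volume.restrict (Icc (0:ℝ) 1)))
    {a b : ℝ} (ha : (0:ℝ) ≤ a) (hb : b ≤ 1) (M : ℝ≥0∞)
    (hM : (∫⁻ x in Icc (0:ℝ) 1, ENNReal.ofReal ((g x)^2)) ≤ M) :
    (∫⁻ x in Ioc a b, ENNReal.ofReal |g x|)
      ≤ M ^ (1/2:ℝ) * (ENNReal.ofReal (b-a)) ^ (1/2:ℝ) := by
  have hsub : Ioc a b ⊆ Icc (0:ℝ) 1 := fun x hx => ⟨ha.trans hx.1.le, hx.2.trans hb⟩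
  have hle : volume.restrict (Ioc a b) ≤ volume.restrict (Icc (0:ℝ) 1) :=
    Measure.restrict_mono hsub le_rfl
  have hm' : AEMeasurable (fun x => ENNReal.ofReal |g x|) (volume.restrict (Ioc a b)) := by
    refine (hm.mono_measure hle).enorm.congr (Filter.Eventually.of_forall fun x => ?_)
    simp [← ofReal_norm, Real.norm_eq_abs]
  have hpq : Real.HolderConjugate 2 2 := Real.HolderConjugate.two_two
  have holder := ENNReal.lintegral_mul_le_Lp_mul_Lq (volume.restrict (Ioc a b)) hpq
    hm' (aemeasurable_const (b := (1:ℝ≥0∞)))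
  simp only [mul_one, Pi.mul_apply, ENNReal.one_rpow, lintegral_one,
    Measure.restrict_apply_univ] at holder
  have heq : ∀ x : ℝ, (ENNReal.ofReal |g x|) ^ (2:ℝ) = ENNReal.ofReal ((g x)^2) := by
    intro x
    rw [ENNReal.ofReal_rpow_of_nonneg (abs_nonneg _) (by norm_num)]
    congr 1
    rw [show ((2:ℝ)) = ((2:ℕ):ℝ) by norm_num, Real.rpow_natCast, sq_abs]
  calc (∫⁻ x in Ioc a b, ENNReal.ofReal |g x|)
      ≤ (∫⁻ x in Ioc a b, (ENNReal.ofReal |g x|) ^ (2:ℝ)) ^ (1/2:ℝ)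
        * (volume (Ioc a b)) ^ (1/2:ℝ) := holder
    _ ≤ M ^ (1/2:ℝ) * (ENNReal.ofReal (b-a)) ^ (1/2:ℝ) := by
        rw [Real.volume_Ioc]
        refine mul_le_mul_left (ENNReal.rpow_le_rpow ?_ (by norm_num)) _
        simp only [heq]
        exact le_trans (lintegral_mono' hle le_rfl) hM
theorem aux_key1 (g g' : ℝ → ℝ)
    (hd : ∀ x ∈ Icc (0:ℝ) 1, HasDerivWithinAt g (g' x) (Icc (0:ℝ) 1) x)
    (M : ℝ≥0∞) (hMt : M ≠ ⊤)
    (hM : (∫⁻ x in Icc (0:ℝ) 1, ENNReal.ofReal ((g' x)^2)) ≤ M)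
    {a b : ℝ} (ha : a ∈ Icc (0:ℝ) 1) (hb : b ∈ Icc (0:ℝ) 1) (hab : a ≤ b) :
    |g b - g a| ≤ Real.sqrt M.toReal * Real.sqrt (b - a) := by
  have hmeas := aux_meas g g' hd
  have hsub : Ioc a b ⊆ Icc (0:ℝ) 1 := fun x hx => ⟨ha.1.trans hx.1.le, hx.2.trans hb.2⟩
  have hle : volume.restrict (Ioc a b) ≤ volume.restrict (Icc (0:ℝ) 1) :=
    Measure.restrict_mono hsub le_rfl
  have hmeas' : AEMeasurable g' (volume.restrict (Ioc a b)) := hmeas.mono_measure hle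
  have hhold := aux_holder g' hmeas ha.1 hb.2 M hM (a := a) (b := b)
  have hRne : (M ^ (1/2:ℝ) * (ENNReal.ofReal (b-a)) ^ (1/2:ℝ)) ≠ ⊤ :=
    ENNReal.mul_ne_top (ENNReal.rpow_ne_top_of_nonneg (by norm_num) hMt)
      (ENNReal.rpow_ne_top_of_nonneg (by norm_num) ENNReal.ofReal_ne_top)
  have hii : IntervalIntegrable g' volume a b := by
    rw [intervalIntegrable_iff_integrableOn_Ioc_of_le hab]
    refine ⟨hmeas'.aestronglyMeasurable, ?_⟩
    rw [hasFiniteIntegral_iff_norm]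
    simp only [Real.norm_eq_abs]
    exact lt_of_le_of_lt hhold hRne.lt_top
  have hcontg : ContinuousOn g (Icc (0:ℝ) 1) := fun x hx => (hd x hx).continuousWithinAt
  have heq : ∫ t in a..b, g' t = g b - g a := by
    refine intervalIntegral.integral_eq_sub_of_hasDeriv_right_of_le hab
      (hcontg.mono (Icc_subset_Icc ha.1 hb.2)) (fun x hx => ?_) hii
    have hx' : x ∈ Icc (0:ℝ) 1 := ⟨ha.1.trans hx.1.le, hx.2.le.trans hb.2⟩
    exact ((hd x hx').hasDerivAt (Icc_mem_nhds (ha.1.trans_lt hx.1)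
      (hx.2.trans_le hb.2))).hasDerivWithinAt
  rw [← heq]
  have habs : AEStronglyMeasurable (fun t => |g' t|) (volume.restrict (Ioc a b)) :=
    hmeas'.aestronglyMeasurable.norm.congr
      (Filter.Eventually.of_forall fun x => Real.norm_eq_abs _)
  calc |∫ t in a..b, g' t| ≤ ∫ t in a..b, |g' t| :=
        intervalIntegral.abs_integral_le_integral_abs hab
    _ = ∫ t in Ioc a b, |g' t| := intervalIntegral.integral_of_le hab
    _ = (∫⁻ t in Ioc a b, ENNReal.ofReal |g' t|).toReal :=
        integral_eq_lintegral_of_nonneg_ae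
          (Filter.Eventually.of_forall fun t => abs_nonneg _) habs
    _ ≤ (M ^ (1/2:ℝ) * (ENNReal.ofReal (b-a)) ^ (1/2:ℝ)).toReal :=
        ENNReal.toReal_mono hRne hhold
    _ = Real.sqrt M.toReal * Real.sqrt (b - a) := by
        rw [ENNReal.toReal_mul, ← ENNReal.toReal_rpow, ← ENNReal.toReal_rpow,
          ENNReal.toReal_ofReal (sub_nonneg.2 hab), Real.sqrt_eq_rpow, Real.sqrt_eq_rpow]
theorem aux_key2 (F g : ℝ → ℝ) (C : ℝ) (hC : 0 ≤ C)
    (hdF : ∀ x ∈ Icc (0:ℝ) 1, HasDerivWithinAt F (g x) (Icc (0:ℝ) 1) x)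
    (hg : ContinuousOn g (Icc (0:ℝ) 1))
    (hinc : ∀ u v, u ∈ Icc (0:ℝ) 1 → v ∈ Icc (0:ℝ) 1 → |g v - g u| ≤ C * Real.sqrt |v - u|)
    {a b c : ℝ} (ha : a ∈ Icc (0:ℝ) 1) (hb : b ∈ Icc (0:ℝ) 1) (hc : c ∈ Icc a b)
    (hab : a ≤ b) :
    |F b - F a - (b - a) * g c| ≤ C * Real.sqrt (b - a) * (b - a) := by
  have hsub : Icc a b ⊆ Icc (0:ℝ) 1 := Icc_subset_Icc ha.1 hb.2
  have hii : IntervalIntegrable g volume a b :=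
    (hg.mono hsub).intervalIntegrable_of_Icc hab
  have hcontF : ContinuousOn F (Icc (0:ℝ) 1) := fun x hx => (hdF x hx).continuousWithinAt
  have heqF : ∫ t in a..b, g t = F b - F a := by
    refine intervalIntegral.integral_eq_sub_of_hasDeriv_right_of_le hab
      (hcontF.mono hsub) (fun x hx => ?_) hii
    have hx' : x ∈ Icc (0:ℝ) 1 := ⟨ha.1.trans hx.1.le, hx.2.le.trans hb.2⟩
    exact ((hdF x hx').hasDerivAt (Icc_mem_nhds (ha.1.trans_lt hx.1)
      (hx.2.trans_le hb.2))).hasDerivWithinAt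
  have hrw : F b - F a - (b - a) * g c = ∫ t in a..b, (g t - g c) := by
    rw [intervalIntegral.integral_sub hii intervalIntegrable_const,
      intervalIntegral.integral_const, heqF, smul_eq_mul]
  rw [hrw, ← Real.norm_eq_abs]
  have h := intervalIntegral.norm_integral_le_of_norm_le_const
    (C := C * Real.sqrt (b - a)) (f := fun t => g t - g c) (a := a) (b := b) ?_
  · calc ‖∫ t in a..b, (g t - g c)‖ ≤ C * Real.sqrt (b - a) * |b - a| := h
      _ = C * Real.sqrt (b - a) * (b - a) := by rw [abs_of_nonneg (sub_nonneg.2 hab)]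
  · intro t ht
    rw [Set.uIoc_of_le hab] at ht
    have ht' : t ∈ Icc (0:ℝ) 1 := hsub ⟨ht.1.le, ht.2⟩
    have hc' : c ∈ Icc (0:ℝ) 1 := hsub hc
    rw [Real.norm_eq_abs]
    refine le_trans (hinc c t hc' ht') (mul_le_mul_of_nonneg_left ?_ hC)
    refine Real.sqrt_le_sqrt (abs_le.2 ⟨by linarith [hc.1, hc.2, ht.1, ht.2], by
      linarith [hc.1, hc.2, ht.1, ht.2]⟩)
/-- If `f : [0,1] × Y → ℝ` is continuous in `y`, twice differentiable in `x`
with first and second partial derivatives `fx` and `fxx`, and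
`sup_{y ∈ Y} ∫₀¹ (fxx x y)² dx < ∞`, then `fx` is jointly continuous on `[0,1] × Y`. -/
theorem stmt4 (Y : Set ℝ) (f fx fxx : ℝ → ℝ → ℝ)
    (hcont : ∀ x ∈ Icc (0:ℝ) 1, ContinuousOn (fun y => f x y) Y)
    (hderiv1 : ∀ x ∈ Icc (0:ℝ) 1, ∀ y ∈ Y,
      HasDerivWithinAt (fun t => f t y) (fx x y) (Icc (0:ℝ) 1) x)
    (hderiv2 : ∀ x ∈ Icc (0:ℝ) 1, ∀ y ∈ Y,
      HasDerivWithinAt (fun t => fx t y) (fxx x y) (Icc (0:ℝ) 1) x)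
    (hbound : (⨆ y ∈ Y, ∫⁻ x in Icc (0:ℝ) 1, ENNReal.ofReal ((fxx x y) ^ 2)) < ⊤) :
    ContinuousOn (fun p : ℝ × ℝ => fx p.1 p.2) (Icc (0:ℝ) 1 ×ˢ Y) := by
  set M := ⨆ y ∈ Y, ∫⁻ x in Icc (0:ℝ) 1, ENNReal.ofReal ((fxx x y)^2) with hMdef
  have hMt : M ≠ ⊤ := hbound.ne
  set C := Real.sqrt M.toReal with hCdef
  have hC0 : 0 ≤ C := Real.sqrt_nonneg _
  have hL2 : ∀ y ∈ Y, (∫⁻ x in Icc (0:ℝ) 1, ENNReal.ofReal ((fxx x y)^2)) ≤ M := by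
    intro y hy
    exact le_biSup (fun y => ∫⁻ x in Icc (0:ℝ) 1, ENNReal.ofReal ((fxx x y)^2)) hy
  have key1 : ∀ y ∈ Y, ∀ u v, u ∈ Icc (0:ℝ) 1 → v ∈ Icc (0:ℝ) 1 →
      |fx v y - fx u y| ≤ C * Real.sqrt |v - u| := by
    intro y hy u v hu hv
    rcases le_total u v with h | h
    · rw [abs_of_nonneg (sub_nonneg.2 h)]
      exact aux_key1 (fun t => fx t y) (fun t => fxx t y)
        (fun x hx => hderiv2 x hx y hy) M hMt (hL2 y hy) hu hv h
    · rw [abs_of_nonpos (sub_nonpos.2 h), abs_sub_comm, neg_sub]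
      exact aux_key1 (fun t => fx t y) (fun t => fxx t y)
        (fun x hx => hderiv2 x hx y hy) M hMt (hL2 y hy) hv hu h
  have hgcont : ∀ y ∈ Y, ContinuousOn (fun t => fx t y) (Icc (0:ℝ) 1) :=
    fun y hy x hx => (hderiv2 x hx y hy).continuousWithinAt
  have key2 : ∀ y ∈ Y, ∀ a b c : ℝ, a ∈ Icc (0:ℝ) 1 → b ∈ Icc (0:ℝ) 1 → c ∈ Icc a b →
      a ≤ b → |f b y - f a y - (b-a) * fx c y| ≤ C * Real.sqrt (b-a) * (b-a) :=
    fun y hy a b c ha hb hc hab => aux_key2 (fun t => f t y) (fun t => fx t y) C hC0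
      (fun x hx => hderiv1 x hx y hy) (hgcont y hy) (key1 y hy) ha hb hc hab
  rintro ⟨x₀, y₀⟩ ⟨hx₀, hy₀⟩
  rw [Metric.continuousWithinAt_iff]
  intro ε hε
  set η : ℝ := min (1/2) ((ε / (6*(C+1)))^2) with hη
  have hη0 : 0 < η := lt_min (by norm_num) (pow_pos (div_pos hε (by positivity)) 2)
  have hη2 : η ≤ 1/2 := min_le_left _ _
  have hCη : C * Real.sqrt η ≤ ε/6 := by
    have h1 : Real.sqrt η ≤ ε / (6*(C+1)) := by
      calc Real.sqrt η ≤ Real.sqrt ((ε/(6*(C+1)))^2) := Real.sqrt_le_sqrt (min_le_right _ _)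
        _ = ε/(6*(C+1)) := Real.sqrt_sq (by positivity)
    calc C * Real.sqrt η ≤ (C+1) * (ε/(6*(C+1))) := by
          refine mul_le_mul (by linarith) h1 (Real.sqrt_nonneg _) (by positivity)
      _ = ε/6 := by
          field_simp
  obtain ⟨a, b, hab, ha, hb, hba, hmemx⟩ : ∃ a b : ℝ, a ≤ b ∧ a ∈ Icc (0:ℝ) 1 ∧
      b ∈ Icc (0:ℝ) 1 ∧ b - a = η ∧ x₀ ∈ Icc a b := by
    rcases le_or_gt (x₀ + η) 1 with h | h
    · exact ⟨x₀, x₀ + η, by linarith, hx₀, ⟨by linarith [hx₀.1], h⟩, by ring,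
        ⟨le_rfl, by linarith⟩⟩
    · exact ⟨x₀ - η, x₀, by linarith, ⟨by linarith [hx₀.2], by linarith [hx₀.2]⟩, hx₀,
        by ring, ⟨by linarith, le_rfl⟩⟩
  set g : ℝ → ℝ := fun y => (f b y - f a y) / η with hgdef
  have hgapprox : ∀ y ∈ Y, |g y - fx x₀ y| ≤ ε/6 := by
    intro y hy
    have h2 := key2 y hy a b x₀ ha hb hmemx hab
    rw [hba] at h2
    have heq : g y - fx x₀ y = (f b y - f a y - η * fx x₀ y)/η := by
      field_simp [hgdef]
      simp only [hgdef]
      rw [sub_mul, div_mul_cancel₀ _ hη0.ne']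
    rw [heq, abs_div, abs_of_pos hη0, div_le_iff₀ hη0]
    calc |f b y - f a y - η * fx x₀ y| ≤ C * Real.sqrt η * η := h2
      _ ≤ ε/6 * η := mul_le_mul_of_nonneg_right hCη hη0.le
  have hgc : ContinuousWithinAt g Y y₀ :=
    ((hcont b hb y₀ hy₀).sub (hcont a ha y₀ hy₀)).div_const η
  rw [Metric.continuousWithinAt_iff] at hgc
  obtain ⟨δ₂, hδ₂0, hδ₂⟩ := hgc (ε/2) (by linarith)
  refine ⟨min η δ₂, lt_min hη0 hδ₂0, ?_⟩
  rintro ⟨x, y⟩ ⟨hx, hy⟩ hdist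
  simp only [Prod.dist_eq, max_lt_iff] at hdist
  obtain ⟨hdx, hdy⟩ := hdist
  have h1 : |fx x y - fx x₀ y| ≤ ε/6 := by
    refine le_trans (key1 y hy x₀ x hx₀ hx) (le_trans ?_ hCη)
    refine mul_le_mul_of_nonneg_left (Real.sqrt_le_sqrt ?_) hC0
    rw [Real.dist_eq] at hdx
    linarith [lt_of_lt_of_le hdx (min_le_left η δ₂)]
  have h2 := hgapprox y hy
  have h3 := hgapprox y₀ hy₀
  have h4 : dist (g y) (g y₀) < ε/2 := hδ₂ hy (lt_of_lt_of_le hdy (min_le_right _ _))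
  rw [Real.dist_eq] at h4
  have : dist (fx x y) (fx x₀ y₀) < ε := by
    rw [Real.dist_eq]
    have t1 : |fx x y - fx x₀ y₀| ≤ |fx x y - fx x₀ y| + |fx x₀ y - g y| + |g y - g y₀|
        + |g y₀ - fx x₀ y₀| := by
      have := abs_sub_le (fx x y) (fx x₀ y) (fx x₀ y₀)
      have h5 := abs_sub_le (fx x₀ y) (g y) (fx x₀ y₀)
      have h6 := abs_sub_le (g y) (g y₀) (fx x₀ y₀)
      linarith
    rw [abs_sub_comm (fx x₀ y) (g y)] at t1
    linarith
  exact this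
end
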